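/- arXiv:1301.0478 — 2 statements merged into one kernel-verified Lean document; each statement's English description precedes it below -/
import Mathlib

section
/- Let a, b be natural numbers and let R be the quotient of the polynomial ring ℂ[x_1,…,x_a,y_1,…,y_b] by the ideal generated by the squares x_1²,…,x_a²,y_1²,…,y_b². The group Sym(a) × Sym(b) acts on R by ℂ-algebra automorphisms, permuting the variables x_1,…,x_a and the variables y_1,…,y_b separately. Then every element of R fixed by every element of Sym(a) × Sym(b) lies in the ℂ-subalgebra of R generated by the images of x_1+⋯+x_a and y_1+⋯+y_b. -/
open MvPolynomial

/-- The ideal of `ℂ[x_1,…,x_a,y_1,…,y_b]` generated by the squares of all the variables. -/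
noncomputable def sqIdeal (a b : ℕ) : Ideal (MvPolynomial (Fin a ⊕ Fin b) ℂ) :=
  Ideal.span {P : MvPolynomial (Fin a ⊕ Fin b) ℂ | ∃ v, P = X v ^ 2}

/-- `R = ℂ[x_1,…,x_a,y_1,…,y_b] / (x_1²,…,x_a²,y_1²,…,y_b²)`. -/
noncomputable abbrev SqRing (a b : ℕ) : Type :=
  MvPolynomial (Fin a ⊕ Fin b) ℂ ⧸ sqIdeal a b

namespace SqHelper

variable {a b : ℕ}

lemma X_pow_mem {m : ℕ} (hm : 2 ≤ m) (v : Fin a ⊕ Fin b) :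
    (X v : MvPolynomial (Fin a ⊕ Fin b) ℂ) ^ m ∈ sqIdeal a b := by
  have h : (X v : MvPolynomial (Fin a ⊕ Fin b) ℂ) ^ m = X v ^ 2 * X v ^ (m - 2) := by
    rw [← pow_add]; congr 1; omega
  rw [h]
  exact Ideal.mul_mem_right _ _ (Ideal.subset_span ⟨v, rfl⟩)

lemma mk_rename_psum {n m : ℕ} (hm : 2 ≤ m) (f : Fin n → Fin a ⊕ Fin b) :
    Ideal.Quotient.mk (sqIdeal a b) (rename f (psum (Fin n) ℂ m)) = 0 := by
  rw [psum, map_sum, map_sum]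
  refine Finset.sum_eq_zero fun i _ => ?_
  rw [map_pow, rename_X]
  exact (Ideal.Quotient.eq_zero_iff_mem).mpr (X_pow_mem hm _)

lemma mk_rename_esymm_mem {n : ℕ} (f : Fin n → Fin a ⊕ Fin b)
    (S : Subalgebra ℂ (SqRing a b))
    (h1 : Ideal.Quotient.mk (sqIdeal a b) (rename f (psum (Fin n) ℂ 1)) ∈ S) (k : ℕ) :
    Ideal.Quotient.mk (sqIdeal a b) (rename f (esymm (Fin n) ℂ k)) ∈ S := by
  open Finset in
  set g : MvPolynomial (Fin n) ℂ →ₐ[ℂ] SqRing a b :=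
    (Ideal.Quotient.mkₐ ℂ (sqIdeal a b)).comp (rename f) with hg
  have hgapp : ∀ p, g p = Ideal.Quotient.mk (sqIdeal a b) (rename f p) := fun p => rfl
  rw [← hgapp]
  induction k with
  | zero => simpa [esymm_zero] using S.one_mem
  | succ k ih =>
    have hN := congrArg g (mul_esymm_eq_sum (Fin n) ℂ (k + 1))
    rw [map_mul, map_mul, map_natCast, map_pow, map_neg, map_one, map_sum] at hN
    have hmem : ((k, 1) : ℕ × ℕ) ∈ {x ∈ antidiagonal (k + 1) | x.1 < k + 1} := by
      simp [Finset.mem_filter, Finset.mem_antidiagonal]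
    have h0 : ∀ x ∈ {x ∈ antidiagonal (k + 1) | x.1 < k + 1}, x ≠ ((k, 1) : ℕ × ℕ) →
        g ((-1) ^ x.1 * esymm (Fin n) ℂ x.1 * psum (Fin n) ℂ x.2) = 0 := by
      rintro ⟨i, j⟩ hmem' hne
      rw [Finset.mem_filter, Finset.HasAntidiagonal.mem_antidiagonal] at hmem'
      have hj : 2 ≤ j := by
        have : ¬(i = k ∧ j = 1) := by simpa [Prod.ext_iff] using hne
        omega
      rw [map_mul, hgapp (psum (Fin n) ℂ j), mk_rename_psum hj, mul_zero]
    rw [Finset.sum_eq_single_of_mem ((k, 1) : ℕ × ℕ) hmem h0, map_mul, map_mul, map_pow,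
      map_neg, map_one] at hN
    have hsimp : ((-1 : SqRing a b)) ^ (k + 1 + 1) *
        ((-1) ^ k * g (esymm (Fin n) ℂ k) * g (psum (Fin n) ℂ 1))
        = g (esymm (Fin n) ℂ k) * g (psum (Fin n) ℂ 1) := by
      calc ((-1 : SqRing a b)) ^ (k + 1 + 1) *
          ((-1) ^ k * g (esymm (Fin n) ℂ k) * g (psum (Fin n) ℂ 1))
          = ((-1) ^ (k + 1 + 1) * (-1) ^ k) *
            (g (esymm (Fin n) ℂ k) * g (psum (Fin n) ℂ 1)) := by ring
        _ = g (esymm (Fin n) ℂ k) * g (psum (Fin n) ℂ 1) := by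
            rw [← pow_add, show k + 1 + 1 + k = 2 * (k + 1) by ring, pow_mul]; norm_num
    rw [hsimp] at hN
    have hcast : ((k + 1 : ℕ) : SqRing a b) = algebraMap ℂ _ ((k + 1 : ℕ) : ℂ) := by
      rw [map_natCast]
    have hval : g (esymm (Fin n) ℂ (k + 1)) =
        (((k + 1 : ℕ) : ℂ))⁻¹ • (g (esymm (Fin n) ℂ k) * g (psum (Fin n) ℂ 1)) := by
      rw [← hN, hcast, ← Algebra.smul_def, smul_smul,
        inv_mul_cancel₀ (Nat.cast_ne_zero.mpr k.succ_ne_zero), one_smul]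
    rw [hval]
    exact S.smul_mem (S.mul_mem ih h1) _

lemma comm_inl (σ : Equiv.Perm (Fin a)) :
    ((rename ⇑σ : MvPolynomial (Fin a) (MvPolynomial (Fin b) ℂ) →ₐ[MvPolynomial (Fin b) ℂ] _).toRingHom.comp
        (sumAlgEquiv ℂ (Fin a) (Fin b) : MvPolynomial (Fin a ⊕ Fin b) ℂ →+* _))
      = ((sumAlgEquiv ℂ (Fin a) (Fin b) : MvPolynomial (Fin a ⊕ Fin b) ℂ →+* _).comp
        (rename ⇑(Equiv.sumCongr σ (Equiv.refl (Fin b)))).toRingHom) := by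
  apply MvPolynomial.ringHom_ext
  · intro r
    simp [sumToIter_C]
  · rintro (i | j) <;>
      simp [sumToIter_Xl, sumToIter_Xr]

lemma comm_inr (τ : Equiv.Perm (Fin b)) :
    ((map ((rename ⇑τ : MvPolynomial (Fin b) ℂ →ₐ[ℂ] _)).toRingHom :
        MvPolynomial (Fin a) (MvPolynomial (Fin b) ℂ) →+* _).comp
        (sumAlgEquiv ℂ (Fin a) (Fin b) : MvPolynomial (Fin a ⊕ Fin b) ℂ →+* _))
      = ((sumAlgEquiv ℂ (Fin a) (Fin b) : MvPolynomial (Fin a ⊕ Fin b) ℂ →+* _).comp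
        (rename ⇑(Equiv.sumCongr (Equiv.refl (Fin a)) τ)).toRingHom) := by
  apply MvPolynomial.ringHom_ext
  · intro r
    simp [sumToIter_C]
  · rintro (i | j) <;>
      simp [sumToIter_Xl, sumToIter_Xr]

lemma comm_aeval (τ : Equiv.Perm (Fin b)) :
    ((map ((rename ⇑τ : MvPolynomial (Fin b) ℂ →ₐ[ℂ] _)).toRingHom :
        MvPolynomial (Fin a) (MvPolynomial (Fin b) ℂ) →+* _)).comp
      ((aeval (fun i : Fin a =>
          esymm (Fin a) (MvPolynomial (Fin b) ℂ) (i + 1))).toRingHom)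
    = ((aeval (fun i : Fin a =>
          esymm (Fin a) (MvPolynomial (Fin b) ℂ) (i + 1))).toRingHom).comp
      (map ((rename ⇑τ : MvPolynomial (Fin b) ℂ →ₐ[ℂ] _)).toRingHom :
        MvPolynomial (Fin a) (MvPolynomial (Fin b) ℂ) →+* _) := by
  apply MvPolynomial.ringHom_ext
  · intro c
    simp [algebraMap_eq]
  · intro i
    simp [map_esymm]

lemma iterToSum_C_eq (c : MvPolynomial (Fin b) ℂ) :
    iterToSum ℂ (Fin a) (Fin b) (C c) = rename Sum.inr c := by
  have h : (iterToSum ℂ (Fin a) (Fin b)).comp (C : MvPolynomial (Fin b) ℂ →+* _)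
      = (rename (Sum.inr : Fin b → Fin a ⊕ Fin b)).toRingHom := by
    apply MvPolynomial.ringHom_ext
    · intro r; simp [iterToSum_C_C]
    · intro j; simp [iterToSum_C_X]
  exact RingHom.congr_fun h c

lemma iterToSum_map_C_eq (p : MvPolynomial (Fin a) ℂ) :
    iterToSum ℂ (Fin a) (Fin b) (map (C : ℂ →+* MvPolynomial (Fin b) ℂ) p)
      = rename Sum.inl p := by
  have h : (iterToSum ℂ (Fin a) (Fin b)).comp (map (C : ℂ →+* MvPolynomial (Fin b) ℂ))
      = (rename (Sum.inl : Fin a → Fin a ⊕ Fin b)).toRingHom := by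
    apply MvPolynomial.ringHom_ext
    · intro r; simp [iterToSum_C_C]
    · intro i; simp [iterToSum_X]
  exact RingHom.congr_fun h p

lemma symm_mem (p : MvPolynomial (Fin a ⊕ Fin b) ℂ)
    (hp : ∀ σ : Equiv.Perm (Fin a) × Equiv.Perm (Fin b),
      rename (Equiv.sumCongr σ.1 σ.2) p = p)
    (S : Subalgebra ℂ (MvPolynomial (Fin a ⊕ Fin b) ℂ))
    (hX : ∀ k, rename (Sum.inl : Fin a → Fin a ⊕ Fin b) (esymm (Fin a) ℂ k) ∈ S)
    (hY : ∀ k, rename (Sum.inr : Fin b → Fin a ⊕ Fin b) (esymm (Fin b) ℂ k) ∈ S) :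
    p ∈ S := by
  classical
  set B := MvPolynomial (Fin b) ℂ with hB
  set E := sumAlgEquiv ℂ (Fin a) (Fin b) with hE
  set P : MvPolynomial (Fin a) B := E p with hP
  set e : Fin a → MvPolynomial (Fin a) B := fun i => esymm (Fin a) B (i + 1) with he
  have hPsym : P.IsSymmetric := by
    intro σ
    have h1 := RingHom.congr_fun (comm_inl (a := a) (b := b) σ) p
    calc rename ⇑σ P
        = E (rename ⇑(Equiv.sumCongr σ (1 : Equiv.Perm (Fin b))) p) := h1
      _ = P := by rw [hp (σ, 1)]
  obtain ⟨F, hF⟩ := (esymmAlgHom_fin_bijective B a).2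
    ⟨P, (mem_symmetricSubalgebra P).mpr hPsym⟩
  have hFP : aeval e F = P := by
    have h := congrArg Subtype.val hF
    rwa [esymmAlgHom_apply] at h
  have hΨF : ∀ τ : Equiv.Perm (Fin b),
      map ((rename ⇑τ : B →ₐ[ℂ] B) : B →+* B) F = F := by
    intro τ
    apply esymmAlgHom_fin_injective B (le_refl a)
    apply Subtype.ext
    rw [esymmAlgHom_apply, esymmAlgHom_apply]
    have h2 := RingHom.congr_fun (comm_aeval (a := a) τ) F
    have h3 := RingHom.congr_fun (comm_inr (a := a) τ) p
    calc aeval (fun i : Fin a => esymm (Fin a) B (i + 1))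
          (map ((rename ⇑τ : B →ₐ[ℂ] B) : B →+* B) F)
        = map ((rename ⇑τ : B →ₐ[ℂ] B) : B →+* B)
            (aeval (fun i : Fin a => esymm (Fin a) B (i + 1)) F) := h2.symm
      _ = map ((rename ⇑τ : B →ₐ[ℂ] B) : B →+* B) P := by rw [hFP]
      _ = E (rename ⇑(Equiv.sumCongr (1 : Equiv.Perm (Fin a)) τ) p) := h3
      _ = P := by rw [hp (1, τ)]
      _ = aeval (fun i : Fin a => esymm (Fin a) B (i + 1)) F := hFP.symm
  have hcsym : ∀ d : Fin a →₀ ℕ, (coeff d F).IsSymmetric := by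
    intro d τ
    have h := congrArg (coeff d) (hΨF τ)
    rwa [coeff_map] at h
  have hc : ∀ d : Fin a →₀ ℕ,
      rename (Sum.inr : Fin b → Fin a ⊕ Fin b) (coeff d F) ∈ S := by
    intro d
    obtain ⟨G, hG⟩ := (esymmAlgHom_fin_bijective ℂ b).2
      ⟨coeff d F, (mem_symmetricSubalgebra _).mpr (hcsym d)⟩
    have hG' : aeval (fun j : Fin b => esymm (Fin b) ℂ (j + 1)) G = coeff d F := by
      have h := congrArg Subtype.val hG
      rwa [esymmAlgHom_apply] at h
    rw [← hG', comp_aeval_apply]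
    have hsub : Set.range (fun j : Fin b =>
        rename (Sum.inr : Fin b → Fin a ⊕ Fin b) (esymm (Fin b) ℂ (j + 1))) ⊆ ↑S := by
      rintro _ ⟨j, rfl⟩; exact hY _
    have hmem : aeval (fun j : Fin b =>
        rename (Sum.inr : Fin b → Fin a ⊕ Fin b) (esymm (Fin b) ℂ (j + 1))) G ∈
        Algebra.adjoin ℂ (Set.range fun j : Fin b =>
          rename (Sum.inr : Fin b → Fin a ⊕ Fin b) (esymm (Fin b) ℂ (j + 1))) := by
      rw [Algebra.adjoin_range_eq_range_aeval]
      exact ⟨G, rfl⟩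
    exact Algebra.adjoin_le hsub hmem
  have hPsum : P = ∑ d ∈ F.support, C (coeff d F) * ∏ i ∈ d.support, e i ^ d i := by
    rw [← hFP]
    conv_lhs => rw [F.as_sum]
    rw [map_sum]
    refine Finset.sum_congr rfl fun d _ => ?_
    rw [aeval_monomial, algebraMap_eq]
    rfl
  have hfinal : E.symm P ∈ S := by
    rw [hPsum, map_sum]
    refine S.sum_mem fun d _ => ?_
    rw [map_mul]
    refine S.mul_mem ?_ ?_
    · have hCd : E.symm (C (coeff d F)) = rename Sum.inr (coeff d F) := by
        rw [AlgEquiv.symm_apply_eq]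
        exact RingHom.congr_fun (show (C : B →+* MvPolynomial (Fin a) B) =
          ((sumAlgEquiv ℂ (Fin a) (Fin b) : MvPolynomial (Fin a ⊕ Fin b) ℂ →+* _).comp
            (rename (Sum.inr : Fin b → Fin a ⊕ Fin b)).toRingHom) from by
          apply MvPolynomial.ringHom_ext <;> intro _ <;> simp) (coeff d F)
      rw [hCd]; exact hc d
    · rw [map_prod]
      refine S.prod_mem fun i _ => ?_
      rw [map_pow]
      refine S.pow_mem ?_ _
      have hei : E.symm (e i) = rename Sum.inl (esymm (Fin a) ℂ (i + 1)) := by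
        have h4 : e i = map (C : ℂ →+* B) (esymm (Fin a) ℂ (i + 1)) :=
          by rw [map_esymm]
        rw [h4]
        rw [AlgEquiv.symm_apply_eq]
        exact RingHom.congr_fun (show (map (C : ℂ →+* B) : MvPolynomial (Fin a) ℂ →+* _) =
          ((sumAlgEquiv ℂ (Fin a) (Fin b) : MvPolynomial (Fin a ⊕ Fin b) ℂ →+* _).comp
            (rename (Sum.inl : Fin a → Fin a ⊕ Fin b)).toRingHom) from by
          apply MvPolynomial.ringHom_ext <;> intro _ <;> simp) _
      rw [hei]; exact hX _
  have hpE : E.symm P = p := by rw [hP]; exact (sumAlgEquiv ℂ (Fin a) (Fin b)).symm_apply_apply p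
  rwa [hpE] at hfinal

end SqHelper

/-- Every element of `R` fixed by the `Sym(a) × Sym(b)`-action (permuting the `x`-variables and
`y`-variables separately) lies in the `ℂ`-subalgebra of `R` generated by the images of
`x_1 + ⋯ + x_a` and `y_1 + ⋯ + y_b`. -/
theorem invariants_generated_by_power_sums (a b : ℕ)
    (r : SqRing a b) (q : MvPolynomial (Fin a ⊕ Fin b) ℂ)
    (hq : Ideal.Quotient.mk (sqIdeal a b) q = r)
    (hr : ∀ σ : Equiv.Perm (Fin a) × Equiv.Perm (Fin b),
      Ideal.Quotient.mk (sqIdeal a b) (rename (Equiv.sumCongr σ.1 σ.2) q) = r) :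
    r ∈ Algebra.adjoin ℂ
      ({Ideal.Quotient.mk (sqIdeal a b) (∑ i : Fin a, X (Sum.inl i)),
        Ideal.Quotient.mk (sqIdeal a b) (∑ j : Fin b, X (Sum.inr j))} : Set (SqRing a b)) := by
  classical
  set N : ℂ := (Fintype.card (Equiv.Perm (Fin a) × Equiv.Perm (Fin b)) : ℂ) with hNdef
  have hN : N ≠ 0 := Nat.cast_ne_zero.mpr Fintype.card_ne_zero
  set q' : MvPolynomial (Fin a ⊕ Fin b) ℂ :=
    N⁻¹ • ∑ σ : Equiv.Perm (Fin a) × Equiv.Perm (Fin b),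
      rename (Equiv.sumCongr σ.1 σ.2) q with hq'
  -- the class of q' is r
  have hmk : Ideal.Quotient.mkₐ ℂ (sqIdeal a b) q' = r := by
    rw [hq', map_smul, map_sum]
    have heach : ∀ σ : Equiv.Perm (Fin a) × Equiv.Perm (Fin b),
        Ideal.Quotient.mkₐ ℂ (sqIdeal a b) (rename (Equiv.sumCongr σ.1 σ.2) q) = r := by
      intro σ; rw [Ideal.Quotient.mkₐ_eq_mk]; exact hr σ
    rw [Finset.sum_congr rfl (fun σ _ => heach σ), Finset.sum_const, Finset.card_univ,
      ← Nat.cast_smul_eq_nsmul ℂ, smul_smul, inv_mul_cancel₀ hN, one_smul]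
  -- q' is genuinely invariant
  have hinv : ∀ σ : Equiv.Perm (Fin a) × Equiv.Perm (Fin b),
      rename (Equiv.sumCongr σ.1 σ.2) q' = q' := by
    intro τ
    rw [hq', map_smul, map_sum]
    congr 1
    have hterm : ∀ σ : Equiv.Perm (Fin a) × Equiv.Perm (Fin b),
        rename (Equiv.sumCongr τ.1 τ.2) (rename (Equiv.sumCongr σ.1 σ.2) q)
          = rename (Equiv.sumCongr ((τ * σ).1) ((τ * σ).2)) q := by
      intro σ
      have hfun : ⇑(Equiv.sumCongr τ.1 τ.2) ∘ ⇑(Equiv.sumCongr σ.1 σ.2)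
          = ⇑(Equiv.sumCongr ((τ * σ).1) ((τ * σ).2)) := by
        funext v; cases v <;> rfl
      rw [rename_rename, hfun]
    rw [Finset.sum_congr rfl (fun σ _ => hterm σ)]
    exact Equiv.sum_comp (Equiv.mulLeft τ)
      (fun σ : Equiv.Perm (Fin a) × Equiv.Perm (Fin b) =>
        rename (Equiv.sumCongr σ.1 σ.2) q)
  -- conclude via the symmetric-polynomial machinery
  set S0 : Subalgebra ℂ (SqRing a b) := Algebra.adjoin ℂ
      ({Ideal.Quotient.mk (sqIdeal a b) (∑ i : Fin a, X (Sum.inl i)),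
        Ideal.Quotient.mk (sqIdeal a b) (∑ j : Fin b, X (Sum.inr j))} : Set (SqRing a b))
    with hS0
  set S : Subalgebra ℂ (MvPolynomial (Fin a ⊕ Fin b) ℂ) :=
    S0.comap (Ideal.Quotient.mkₐ ℂ (sqIdeal a b)) with hS
  have hgen1 : Ideal.Quotient.mk (sqIdeal a b)
      (rename (Sum.inl : Fin a → Fin a ⊕ Fin b) (psum (Fin a) ℂ 1)) ∈ S0 := by
    have : rename (Sum.inl : Fin a → Fin a ⊕ Fin b) (psum (Fin a) ℂ 1)
        = ∑ i : Fin a, X (Sum.inl i) := by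
      rw [psum_one, map_sum]; simp
    rw [this]
    exact Algebra.subset_adjoin (Set.mem_insert _ _)
  have hgen2 : Ideal.Quotient.mk (sqIdeal a b)
      (rename (Sum.inr : Fin b → Fin a ⊕ Fin b) (psum (Fin b) ℂ 1)) ∈ S0 := by
    have : rename (Sum.inr : Fin b → Fin a ⊕ Fin b) (psum (Fin b) ℂ 1)
        = ∑ j : Fin b, X (Sum.inr j) := by
      rw [psum_one, map_sum]; simp
    rw [this]
    exact Algebra.subset_adjoin (Set.mem_insert_of_mem _ (Set.mem_singleton _))
  have hq'S : q' ∈ S := by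
    apply SqHelper.symm_mem q' hinv S
    · intro k
      rw [hS, Subalgebra.mem_comap, Ideal.Quotient.mkₐ_eq_mk]
      exact SqHelper.mk_rename_esymm_mem _ S0 hgen1 k
    · intro k
      rw [hS, Subalgebra.mem_comap, Ideal.Quotient.mkₐ_eq_mk]
      exact SqHelper.mk_rename_esymm_mem _ S0 hgen2 k
  rw [hS, Subalgebra.mem_comap, hmk] at hq'S
  exact hq'S
end

section
/- Let a, b be natural numbers and let R be the quotient of the polynomial ring ℂ[x_1,…,x_a,y_1,…,y_b] by the ideal generated by the squares x_1²,…,x_a²,y_1²,…,y_b². Then the family of elements (x_1+⋯+x_a)^j · (y_1+⋯+y_b)^i of R, indexed by pairs (j,i) with 0 ≤ j ≤ a and 0 ≤ i ≤ b, is linearly independent over ℂ. -/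
open MvPolynomial

namespace SqRingAux

variable (a b : ℕ)

/-- The sum of the `x` variables. -/
noncomputable def pS : MvPolynomial (Fin a ⊕ Fin b) ℂ := ∑ i : Fin a, X (Sum.inl i)

/-- The sum of the `y` variables. -/
noncomputable def qS : MvPolynomial (Fin a ⊕ Fin b) ℂ := ∑ j : Fin b, X (Sum.inr j)

/-- The squarefree monomial with support `{x_k : k ∈ s}`. -/
noncomputable def monL (s : Finset (Fin a)) : (Fin a ⊕ Fin b) →₀ ℕ :=
  ∑ k ∈ s, Finsupp.single (Sum.inl k) 1

/-- The squarefree monomial with support `{y_k : k ∈ t}`. -/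
noncomputable def monR (t : Finset (Fin b)) : (Fin a ⊕ Fin b) →₀ ℕ :=
  ∑ k ∈ t, Finsupp.single (Sum.inr k) 1

/-- The weight function recording the total degree in the `x` variables. -/
def wL : Fin a ⊕ Fin b → ℕ := Sum.elim (fun _ => 1) (fun _ => 0)

/-- The weight function recording the total degree in the `y` variables. -/
def wR : Fin a ⊕ Fin b → ℕ := Sum.elim (fun _ => 0) (fun _ => 1)

lemma monL_apply_inl (s : Finset (Fin a)) (k : Fin a) :
    monL a b s (Sum.inl k) = if k ∈ s then 1 else 0 := by
  classical
  rw [monL, Finset.sum_apply']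
  simp [Finsupp.single_apply]

lemma monL_apply_inr (s : Finset (Fin a)) (w : Fin b) :
    monL a b s (Sum.inr w) = 0 := by
  classical
  rw [monL, Finset.sum_apply']
  simp [Finsupp.single_apply]

lemma monR_apply_inr (t : Finset (Fin b)) (w : Fin b) :
    monR a b t (Sum.inr w) = if w ∈ t then 1 else 0 := by
  classical
  rw [monR, Finset.sum_apply']
  simp [Finsupp.single_apply]

lemma monR_apply_inl (t : Finset (Fin b)) (k : Fin a) :
    monR a b t (Sum.inl k) = 0 := by
  classical
  rw [monR, Finset.sum_apply']
  simp [Finsupp.single_apply]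

lemma mon_sub_inl (s : Finset (Fin a)) (t : Finset (Fin b)) {k : Fin a} (hk : k ∈ s) :
    monL a b s + monR a b t - Finsupp.single (Sum.inl k) 1
      = monL a b (s.erase k) + monR a b t := by
  classical
  ext v
  rw [Finsupp.tsub_apply, Finsupp.add_apply, Finsupp.add_apply, Finsupp.single_apply]
  cases v with
  | inl k' =>
    rw [monL_apply_inl, monL_apply_inl, monR_apply_inl]
    by_cases h : k' = k
    · subst h; simp [hk]
    · simp [Finset.mem_erase, h, Ne.symm h, Sum.inl.injEq]
  | inr w =>
    rw [monL_apply_inr, monL_apply_inr]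
    simp

lemma mon_sub_inr (s : Finset (Fin a)) (t : Finset (Fin b)) {w : Fin b} (hw : w ∈ t) :
    monL a b s + monR a b t - Finsupp.single (Sum.inr w) 1
      = monL a b s + monR a b (t.erase w) := by
  classical
  ext v
  rw [Finsupp.tsub_apply, Finsupp.add_apply, Finsupp.add_apply, Finsupp.single_apply]
  cases v with
  | inl k => rw [monR_apply_inl, monR_apply_inl]; simp
  | inr w' =>
    rw [monR_apply_inr, monR_apply_inr, monL_apply_inr]
    by_cases h : w' = w
    · subst h; simp [hw]
    · simp [Finset.mem_erase, h, Ne.symm h, Sum.inr.injEq]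

lemma mem_support_mon_inl (s : Finset (Fin a)) (t : Finset (Fin b)) (k : Fin a) :
    Sum.inl k ∈ (monL a b s + monR a b t).support ↔ k ∈ s := by
  rw [Finsupp.mem_support_iff, Finsupp.add_apply, monL_apply_inl, monR_apply_inl]
  split <;> simp_all

lemma mem_support_mon_inr (s : Finset (Fin a)) (t : Finset (Fin b)) (w : Fin b) :
    Sum.inr w ∈ (monL a b s + monR a b t).support ↔ w ∈ t := by
  rw [Finsupp.mem_support_iff, Finsupp.add_apply, monR_apply_inr, monL_apply_inr]
  split <;> simp_all

lemma mon_sqfree (s : Finset (Fin a)) (t : Finset (Fin b)) (v : Fin a ⊕ Fin b) :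
    (monL a b s + monR a b t) v ≤ 1 := by
  rw [Finsupp.add_apply]
  cases v with
  | inl k =>
    rw [monL_apply_inl, monR_apply_inl]
    split <;> simp
  | inr w =>
    rw [monR_apply_inr, monL_apply_inr]
    split <;> simp

lemma weight_monL (s : Finset (Fin a)) (t : Finset (Fin b)) :
    Finsupp.weight (wL a b) (monL a b s + monR a b t) = s.card := by
  rw [map_add, monL, monR, map_sum, map_sum]
  simp [Finsupp.weight_apply, Finsupp.sum_single_index, wL]

lemma weight_monR (s : Finset (Fin a)) (t : Finset (Fin b)) :
    Finsupp.weight (wR a b) (monL a b s + monR a b t) = t.card := by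
  rw [map_add, monL, monR, map_sum, map_sum]
  simp [Finsupp.weight_apply, Finsupp.sum_single_index, wR]

/-- The ideal of polynomials all of whose squarefree coefficients vanish. -/
noncomputable def sqFreeVanish : Ideal (MvPolynomial (Fin a ⊕ Fin b) ℂ) where
  carrier := {P | ∀ m : (Fin a ⊕ Fin b) →₀ ℕ, (∀ v, m v ≤ 1) → coeff m P = 0}
  add_mem' := by
    intro P Q hP hQ m hm
    rw [coeff_add, hP m hm, hQ m hm, add_zero]
  zero_mem' := by intro m hm; simp
  smul_mem' := by
    intro c P hP m hm
    rw [smul_eq_mul, coeff_mul]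
    apply Finset.sum_eq_zero
    rintro ⟨u, v⟩ huv
    rw [Finset.HasAntidiagonal.mem_antidiagonal] at huv
    have hv : ∀ w, v w ≤ 1 := by
      intro w
      refine le_trans ?_ (hm w)
      rw [← huv, Finsupp.add_apply]
      exact Nat.le_add_left _ _
    rw [hP v hv, mul_zero]

lemma coeff_eq_zero_of_mem_sqIdeal {P : MvPolynomial (Fin a ⊕ Fin b) ℂ}
    (hP : P ∈ sqIdeal a b) {m : (Fin a ⊕ Fin b) →₀ ℕ} (hm : ∀ v, m v ≤ 1) :
    coeff m P = 0 := by
  classical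
  have hle : sqIdeal a b ≤ sqFreeVanish a b := by
    rw [sqIdeal, Ideal.span_le]
    rintro _ ⟨v, rfl⟩ m hm
    rw [coeff_X_pow]
    split
    · exfalso
      have := hm v
      subst ‹Finsupp.single v 2 = m›
      simp at this
    · rfl
  exact hle hP m hm

lemma pS_homL : IsWeightedHomogeneous (wL a b) (pS a b) 1 := by
  apply IsWeightedHomogeneous.sum
  intro i _
  simpa [wL] using isWeightedHomogeneous_X ℂ (wL a b) (Sum.inl i)

lemma pS_homR : IsWeightedHomogeneous (wR a b) (pS a b) 0 := by
  apply IsWeightedHomogeneous.sum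
  intro i _
  simpa [wR] using isWeightedHomogeneous_X ℂ (wR a b) (Sum.inl i)

lemma qS_homL : IsWeightedHomogeneous (wL a b) (qS a b) 0 := by
  apply IsWeightedHomogeneous.sum
  intro i _
  simpa [wL] using isWeightedHomogeneous_X ℂ (wL a b) (Sum.inr i)

lemma qS_homR : IsWeightedHomogeneous (wR a b) (qS a b) 1 := by
  apply IsWeightedHomogeneous.sum
  intro i _
  simpa [wR] using isWeightedHomogeneous_X ℂ (wR a b) (Sum.inr i)

lemma hom_pow {w : Fin a ⊕ Fin b → ℕ} {P : MvPolynomial (Fin a ⊕ Fin b) ℂ} {n : ℕ}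
    (h : IsWeightedHomogeneous w P n) (j : ℕ) : IsWeightedHomogeneous w (P ^ j) (j * n) := by
  induction j with
  | zero => simpa using isWeightedHomogeneous_one ℂ w
  | succ j ih =>
    rw [pow_succ, Nat.succ_mul]
    exact ih.mul h

lemma prod_homL (j i : ℕ) : IsWeightedHomogeneous (wL a b) (pS a b ^ j * qS a b ^ i) j := by
  have := (hom_pow a b (pS_homL a b) j).mul (hom_pow a b (qS_homL a b) i)
  simpa using this

lemma prod_homR (j i : ℕ) : IsWeightedHomogeneous (wR a b) (pS a b ^ j * qS a b ^ i) i := by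
  have := (hom_pow a b (pS_homR a b) j).mul (hom_pow a b (qS_homR a b) i)
  simpa using this

lemma coeff_diag : ∀ (j i : ℕ) (s : Finset (Fin a)) (t : Finset (Fin b)),
    s.card = j → t.card = i →
    coeff (monL a b s + monR a b t) (pS a b ^ j * qS a b ^ i)
      = (j.factorial * i.factorial : ℂ) := by
  classical
  intro j
  induction j with
  | zero =>
    intro i
    induction i with
    | zero =>
      intro s t hs ht
      rw [Finset.card_eq_zero.mp hs, Finset.card_eq_zero.mp ht]
      simp [monL, monR]
    | succ i ih =>
      intro s t hs ht
      rw [pow_zero, one_mul, pow_succ,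
        show qS a b ^ i * qS a b = ∑ w : Fin b, qS a b ^ i * X (Sum.inr w) by
          rw [qS]; exact Finset.mul_sum _ _ _,
        MvPolynomial.coeff_sum]
      have hterm : ∀ w : Fin b,
          coeff (monL a b s + monR a b t) (qS a b ^ i * X (Sum.inr w))
            = if w ∈ t then ((0:ℕ).factorial * i.factorial : ℂ) else 0 := by
        intro w
        rw [coeff_mul_X']
        by_cases hw : w ∈ t
        · rw [if_pos ((mem_support_mon_inr a b s t w).mpr hw), if_pos hw,
            mon_sub_inr a b s t hw]
          have := ih s (t.erase w) hs
            (by rw [Finset.card_erase_of_mem hw, ht]; rfl)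
          rw [pow_zero, one_mul] at this
          exact this
        · rw [if_neg (fun h => hw ((mem_support_mon_inr a b s t w).mp h)), if_neg hw]
      rw [Finset.sum_congr rfl fun w _ => hterm w, Finset.sum_ite_mem, Finset.univ_inter,
        Finset.sum_const, ht]
      simp [Nat.factorial_succ]
      try ring
  | succ j ih =>
    intro i s t hs ht
    rw [pow_succ, mul_right_comm,
      show pS a b ^ j * qS a b ^ i * pS a b = ∑ k : Fin a, pS a b ^ j * qS a b ^ i * X (Sum.inl k) by
        rw [pS]; exact Finset.mul_sum _ _ _,
      MvPolynomial.coeff_sum]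
    have hterm : ∀ k : Fin a,
        coeff (monL a b s + monR a b t) (pS a b ^ j * qS a b ^ i * X (Sum.inl k))
          = if k ∈ s then (j.factorial * i.factorial : ℂ) else 0 := by
      intro k
      rw [coeff_mul_X']
      by_cases hk : k ∈ s
      · rw [if_pos ((mem_support_mon_inl a b s t k).mpr hk), if_pos hk,
          mon_sub_inl a b s t hk]
        exact ih i (s.erase k) t (by rw [Finset.card_erase_of_mem hk, hs]; rfl) ht
      · rw [if_neg (fun h => hk ((mem_support_mon_inl a b s t k).mp h)), if_neg hk]
    rw [Finset.sum_congr rfl fun k _ => hterm k, Finset.sum_ite_mem, Finset.univ_inter,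
      Finset.sum_const, hs]
    simp [Nat.factorial_succ]
    try ring

end SqRingAux

open SqRingAux in
/-- The family of elements `(x_1+⋯+x_a)^j · (y_1+⋯+y_b)^i` of `R`, indexed by pairs `(j,i)`
with `0 ≤ j ≤ a` and `0 ≤ i ≤ b`, is linearly independent over `ℂ`. -/
theorem power_sum_products_linearIndependent (a b : ℕ) :
    LinearIndependent ℂ (fun ji : Fin (a + 1) × Fin (b + 1) =>
      Ideal.Quotient.mk (sqIdeal a b)
        ((∑ i : Fin a, X (Sum.inl i)) ^ (ji.1 : ℕ) *
          (∑ j : Fin b, X (Sum.inr j)) ^ (ji.2 : ℕ))) := by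
  classical
  rw [Fintype.linearIndependent_iff]
  intro g hg ji₀
  obtain ⟨j₀, i₀⟩ := ji₀
  obtain ⟨s, -, hs⟩ := Finset.exists_subset_card_eq
    (s := (Finset.univ : Finset (Fin a))) (n := (j₀ : ℕ))
    (by simpa using Nat.lt_succ_iff.mp j₀.isLt)
  obtain ⟨t, -, ht⟩ := Finset.exists_subset_card_eq
    (s := (Finset.univ : Finset (Fin b))) (n := (i₀ : ℕ))
    (by simpa using Nat.lt_succ_iff.mp i₀.isLt)
  set P : MvPolynomial (Fin a ⊕ Fin b) ℂ :=
    ∑ ji : Fin (a + 1) × Fin (b + 1),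
      g ji • (pS a b ^ (ji.1 : ℕ) * qS a b ^ (ji.2 : ℕ)) with hP
  have hmem : P ∈ sqIdeal a b := by
    rw [← Ideal.Quotient.eq_zero_iff_mem, hP, ← Ideal.Quotient.mkₐ_eq_mk ℂ, map_sum, ← hg]
    refine Finset.sum_congr rfl fun ji _ => ?_
    rw [map_smul, Ideal.Quotient.mkₐ_eq_mk, pS, qS]
  have h1 : coeff (monL a b s + monR a b t) P = 0 :=
    coeff_eq_zero_of_mem_sqIdeal a b hmem (mon_sqfree a b s t)
  have h2 : coeff (monL a b s + monR a b t) P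
      = g (j₀, i₀) * ((j₀ : ℕ).factorial * (i₀ : ℕ).factorial : ℂ) := by
    rw [hP, MvPolynomial.coeff_sum]
    rw [Finset.sum_eq_single (j₀, i₀)]
    · rw [coeff_smul, coeff_diag a b _ _ s t hs ht, smul_eq_mul]
    · intro ji _ hne
      rw [coeff_smul]
      have hz : coeff (monL a b s + monR a b t)
          (pS a b ^ (ji.1 : ℕ) * qS a b ^ (ji.2 : ℕ)) = 0 := by
        by_cases hj : (ji.1 : ℕ) = (j₀ : ℕ)
        · have hi : (ji.2 : ℕ) ≠ (i₀ : ℕ) := by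
            intro hi
            exact hne (Prod.ext (Fin.ext hj) (Fin.ext hi))
          exact (prod_homR a b _ _).coeff_eq_zero _
            (by rw [weight_monR a b s t, ht]; exact fun h => hi h.symm)
        · exact (prod_homL a b _ _).coeff_eq_zero _
            (by rw [weight_monL a b s t, hs]; exact fun h => hj h.symm)
      rw [hz, smul_zero]
    · intro h; exact absurd (Finset.mem_univ _) h
  have h3 := h2.symm.trans h1
  rcases mul_eq_zero.mp h3 with h | h
  · exact h
  · exfalso
    rcases mul_eq_zero.mp h with h' | h' <;>
      exact Nat.cast_ne_zero.mpr (Nat.factorial_ne_zero _) h'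
end
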